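/- Let n ≥ 1 and for each pair u ≠ v in {1,…,n} let h_{uv} = |β_{uv}⟩⟨β_{uv}| ⊗ 1 act on (ℂ²)^{⊗n}, where ⟨β_{uv}| = λ_{uv} ⟨Ψ⁻|(L_u ⊗ L_v) for fixed invertible matrices L₁,…,L_n ∈ GL(2,ℂ) and nonzero scalars λ_{uv}. Then the kernel of H = Σ_{u<v} h_{uv} equals T(Sym^n(ℂ²)), where T = (L₁ ⊗ ⋯ ⊗ L_n)^{-1} and Sym^n(ℂ²) is the symmetric subspace of (ℂ²)^{⊗n}. In particular dim ker(H) = n + 1. -/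

import Mathlib

open Matrix

/-- The two-qubit singlet state `|Ψ⁻⟩ = (|01⟩ − |10⟩)/√2` in coordinates. -/
noncomputable def singlet : Fin 2 × Fin 2 → ℂ := fun p =>
  if p = (0, 1) then (((Real.sqrt 2 : ℝ) : ℂ))⁻¹
  else if p = (1, 0) then -(((Real.sqrt 2 : ℝ) : ℂ))⁻¹ else 0

/-- The symmetric subspace of `(ℂ²)^{⊗n}`, in coordinates: functions on `Fin n → Fin 2`
invariant under permutation of the tensor factors. -/
noncomputable def symSubspace (n : ℕ) : Submodule ℂ ((Fin n → Fin 2) → ℂ) where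
  carrier := {Φ | ∀ σ : Equiv.Perm (Fin n), ∀ y : Fin n → Fin 2, Φ (y ∘ σ) = Φ y}
  add_mem' := by intro a b ha hb σ y; simp [ha σ y, hb σ y]
  zero_mem' := by intro σ y; rfl
  smul_mem' := by intro c a ha σ y; simp [ha σ y]

open Finset
namespace Stmt10

variable {n : ℕ}

/-- update two coordinates -/
def upd2 (x : Fin n → Fin 2) (u v : Fin n) (i j : Fin 2) : Fin n → Fin 2 :=
  Function.update (Function.update x u i) v j

lemma upd2_u {u v : Fin n} (h : u ≠ v) (x : Fin n → Fin 2) (i j : Fin 2) :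
    upd2 x u v i j u = i := by
  simp [upd2, Function.update_of_ne h, Function.update_self]

lemma upd2_v {u v : Fin n} (x : Fin n → Fin 2) (i j : Fin 2) :
    upd2 x u v i j v = j := by
  simp [upd2]

lemma upd2_other {u v k : Fin n} (hku : k ≠ u) (hkv : k ≠ v) (x : Fin n → Fin 2) (i j : Fin 2) :
    upd2 x u v i j k = x k := by
  simp [upd2, Function.update_of_ne hku, Function.update_of_ne hkv]

lemma upd2_upd2 {u v : Fin n} (h : u ≠ v) (x : Fin n → Fin 2) (i j i' j' : Fin 2) :
    upd2 (upd2 x u v i j) u v i' j' = upd2 x u v i' j' := by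
  funext k
  by_cases hku : k = u
  · subst hku; rw [upd2_u h, upd2_u h]
  · by_cases hkv : k = v
    · subst hkv; rw [upd2_v, upd2_v]
    · rw [upd2_other hku hkv, upd2_other hku hkv, upd2_other hku hkv]

lemma upd2_self {u v : Fin n} (h : u ≠ v) (x : Fin n → Fin 2) :
    upd2 x u v (x u) (x v) = x := by
  funext k
  by_cases hku : k = u
  · subst hku; rw [upd2_u h]
  · by_cases hkv : k = v
    · subst hkv; rw [upd2_v]
    · rw [upd2_other hku hkv]

/-- shuffling involution -/
def shuf {u v : Fin n} (h : u ≠ v) :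
    (Fin 2 × Fin 2 × (Fin n → Fin 2)) ≃ (Fin 2 × Fin 2 × (Fin n → Fin 2)) :=
    ⟨fun p => (p.2.2 u, p.2.2 v, upd2 p.2.2 u v p.1 p.2.1),
      fun p => (p.2.2 u, p.2.2 v, upd2 p.2.2 u v p.1 p.2.1),
      by rintro ⟨i, j, x⟩; simp only [upd2_u h, upd2_v, upd2_upd2 h, upd2_self h],
      by rintro ⟨i, j, x⟩; simp only [upd2_u h, upd2_v, upd2_upd2 h, upd2_self h]⟩

lemma shuf_apply {u v : Fin n} (h : u ≠ v) (p : Fin 2 × Fin 2 × (Fin n → Fin 2)) :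
    shuf h p = (p.2.2 u, p.2.2 v, upd2 p.2.2 u v p.1 p.2.1) := rfl

/-- the 4-to-1 involution counting lemma -/
lemma sum_upd2 {u v : Fin n} (h : u ≠ v) (F : (Fin n → Fin 2) → ℂ) :
    ∑ i : Fin 2, ∑ j : Fin 2, ∑ x : Fin n → Fin 2, F (upd2 x u v i j)
      = 4 * ∑ x : Fin n → Fin 2, F x := by
  have h1 := Fintype.sum_equiv (shuf h) (fun p : Fin 2 × Fin 2 × (Fin n → Fin 2) => F (upd2 p.2.2 u v p.1 p.2.1))
    (fun p : Fin 2 × Fin 2 × (Fin n → Fin 2) => F p.2.2) (fun p => by rw [shuf_apply h])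
  simp only [Fintype.sum_prod_type] at h1
  rw [h1]
  simp only [Finset.sum_const, Finset.card_univ, Fintype.card_fin, nsmul_eq_mul]
  push_cast
  ring

/-- splitting a delta-constrained sum -/
lemma sum_delta {u v : Fin n} (h : u ≠ v) (f : (Fin n → Fin 2) → ℂ) (x : Fin n → Fin 2) :
    ∑ y : Fin n → Fin 2, f y * (if ∀ k : Fin n, k ≠ u → k ≠ v → x k = y k then 1 else 0)
      = ∑ i : Fin 2, ∑ j : Fin 2, f (upd2 x u v i j) := by
  have key : ∀ i j : Fin 2, ∀ y : Fin n → Fin 2,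
      (upd2 x u v i j = y) ↔ (i = y u ∧ j = y v ∧ ∀ k : Fin n, k ≠ u → k ≠ v → x k = y k) := by
    intro i j y
    constructor
    · rintro rfl
      exact ⟨(upd2_u h x i j).symm, (upd2_v x i j).symm,
        fun k hku hkv => (upd2_other hku hkv x i j).symm⟩
    · rintro ⟨rfl, rfl, hrest⟩
      funext k
      by_cases hku : k = u
      · subst hku; rw [upd2_u h]
      · by_cases hkv : k = v
        · subst hkv; rw [upd2_v]
        · rw [upd2_other hku hkv]; exact hrest k hku hkv
  calc ∑ y : Fin n → Fin 2, f y * (if ∀ k : Fin n, k ≠ u → k ≠ v → x k = y k then 1 else 0)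
      = ∑ y : Fin n → Fin 2, ∑ i : Fin 2, ∑ j : Fin 2,
        (if upd2 x u v i j = y then f y else 0) := by
        refine Finset.sum_congr rfl fun y _ => ?_
        simp only [key]
        by_cases hy : ∀ k : Fin n, k ≠ u → k ≠ v → x k = y k
        · have h2 : ∀ a : Fin 2, a = 0 ∨ a = 1 := by decide
          rcases h2 (y u) with hu | hu <;> rcases h2 (y v) with hv | hv <;>
            simp [hu, hv, hy, Fin.sum_univ_two]
        · simp [hy]
    _ = ∑ i : Fin 2, ∑ j : Fin 2, ∑ y : Fin n → Fin 2,
        (if upd2 x u v i j = y then f y else 0) := by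
        rw [Finset.sum_comm]
        refine Finset.sum_congr rfl fun i _ => Finset.sum_comm
    _ = ∑ i : Fin 2, ∑ j : Fin 2, f (upd2 x u v i j) := by
        refine Finset.sum_congr rfl fun i _ => Finset.sum_congr rfl fun j _ => ?_
        simp

/-- singlet facts -/
lemma singlet_antisym (i j : Fin 2) : singlet (j, i) = - singlet (i, j) := by
  fin_cases i <;> fin_cases j <;> simp [singlet, Prod.ext_iff]

lemma star_singlet (i j : Fin 2) : star (singlet (i, j)) = singlet (i, j) := by
  fin_cases i <;> fin_cases j <;> simp [singlet, Prod.ext_iff]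

lemma sqrt2inv_ne : (((Real.sqrt 2 : ℝ) : ℂ))⁻¹ ≠ 0 := by
  simp only [ne_eq, inv_eq_zero, Complex.ofReal_eq_zero]
  positivity

/-- tensor product of matrices multiply entrywise -/
lemma prod_mul_prod (A B : Fin n → Matrix (Fin 2) (Fin 2) ℂ) (x y : Fin n → Fin 2) :
    ∑ z : Fin n → Fin 2, (∏ k : Fin n, A k (x k) (z k)) * (∏ k : Fin n, B k (z k) (y k))
      = ∏ k : Fin n, (A k * B k) (x k) (y k) := by
  have : ∀ k : Fin n, (A k * B k) (x k) (y k) = ∑ i : Fin 2, A k (x k) i * B k i (y k) := by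
    intro k; rw [Matrix.mul_apply]
  simp only [this]
  rw [Finset.prod_univ_sum]
  rw [Fintype.piFinset_univ]
  refine Finset.sum_congr rfl fun z _ => ?_
  rw [← Finset.prod_mul_distrib]

/-- number of ones -/
def cnt (y : Fin n → Fin 2) : ℕ := (Finset.univ.filter (fun j => y j = 1)).card

lemma cnt_le (y : Fin n → Fin 2) : cnt y ≤ n := by
  simpa [cnt] using (Finset.card_filter_le Finset.univ (fun j => y j = 1)).trans (by simp)

lemma cnt_comp_perm (y : Fin n → Fin 2) (σ : Equiv.Perm (Fin n)) : cnt (y ∘ σ) = cnt y := by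
  unfold cnt
  refine Finset.card_bij (fun j _ => σ j) ?_ ?_ ?_
  · intro a ha
    simp only [Finset.mem_filter, Finset.mem_univ, true_and] at ha ⊢
    exact ha
  · intro a _ b _ hab
    exact σ.injective hab
  · intro b hb
    refine ⟨σ.symm b, ?_, by simp⟩
    simp only [Finset.mem_filter, Finset.mem_univ, true_and, Function.comp] at hb ⊢
    simpa using hb

/-- canonical representative with k ones -/
def rep (n : ℕ) (k : ℕ) : Fin n → Fin 2 := fun j => if (j : ℕ) < k then 1 else 0

lemma cnt_rep {k : ℕ} (hk : k ≤ n) : cnt (rep n k) = k := by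
  unfold cnt rep
  have : (Finset.univ.filter (fun j : Fin n => (if (j : ℕ) < k then (1 : Fin 2) else 0) = 1))
      = Finset.univ.filter (fun j : Fin n => (j : ℕ) < k) := by
    refine Finset.filter_congr fun j _ => ?_
    by_cases hj : (j : ℕ) < k <;> simp [hj]
  rw [this]
  rw [Finset.card_eq_of_bijective (fun i hi => ⟨i, lt_of_lt_of_le hi hk⟩)]
  · intro a ha
    simp only [Finset.mem_filter, Finset.mem_univ, true_and] at ha
    exact ⟨a, ha, rfl⟩
  · intro i hi
    simp [hi]
  · intro i j hi hj hij
    simpa using congrArg Fin.val hij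

lemma exists_perm {y z : Fin n → Fin 2} (h : cnt y = cnt z) :
    ∃ σ : Equiv.Perm (Fin n), z ∘ σ = y := by
  classical
  have hc1 : Fintype.card {j // y j = 1} = Fintype.card {j // z j = 1} := by
    rw [Fintype.card_subtype, Fintype.card_subtype]; exact h
  have hc0 : Fintype.card {j // ¬ y j = 1} = Fintype.card {j // ¬ z j = 1} := by
    rw [Fintype.card_subtype_compl, Fintype.card_subtype_compl, hc1]
  let e1 : {j // y j = 1} ≃ {j // z j = 1} := Fintype.equivOfCardEq hc1
  let e0 : {j // ¬ y j = 1} ≃ {j // ¬ z j = 1} := Fintype.equivOfCardEq hc0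
  refine ⟨((Equiv.sumCompl (fun j => y j = 1)).symm.trans
    ((e1.sumCongr e0).trans (Equiv.sumCompl (fun j => z j = 1)))), ?_⟩
  funext j
  simp only [Function.comp, Equiv.trans_apply]
  by_cases hy : y j = 1
  · rw [Equiv.sumCompl_symm_apply_of_pos (p := fun j => y j = 1) hy]
    simp only [Equiv.sumCongr_apply, Sum.map_inl, Equiv.sumCompl_apply_inl]
    rw [(e1 ⟨j, hy⟩).2, hy]
  · rw [Equiv.sumCompl_symm_apply_of_neg (p := fun j => y j = 1) hy]
    simp only [Equiv.sumCongr_apply, Sum.map_inr, Equiv.sumCompl_apply_inr]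
    have h2 : ∀ a : Fin 2, ¬ a = 1 → a = 0 := by decide
    rw [h2 _ (e0 ⟨j, hy⟩).2, h2 _ hy]

lemma finrank_symSubspace (n : ℕ) : Module.finrank ℂ (symSubspace n) = n + 1 := by
  classical
  let f : symSubspace n →ₗ[ℂ] (Fin (n + 1) → ℂ) :=
    { toFun := fun Φ k => (Φ : (Fin n → Fin 2) → ℂ) (rep n k)
      map_add' := fun a b => rfl
      map_smul' := fun c a => rfl }
  let g : (Fin (n + 1) → ℂ) →ₗ[ℂ] symSubspace n :=
    { toFun := fun c => ⟨fun y => c ⟨cnt y, Nat.lt_succ_of_le (cnt_le y)⟩, by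
        intro σ y
        simp only [cnt_comp_perm]⟩
      map_add' := fun a b => rfl
      map_smul' := fun c a => rfl }
  have hfg : f.comp g = LinearMap.id := by
    refine LinearMap.ext fun c => funext fun k => ?_
    show c ⟨cnt (rep n k), _⟩ = c k
    congr 1
    ext
    simp [cnt_rep (Nat.lt_succ_iff.mp k.isLt)]
  have hgf : g.comp f = LinearMap.id := by
    refine LinearMap.ext fun Φ => Subtype.ext (funext fun y => ?_)
    show (Φ : (Fin n → Fin 2) → ℂ) (rep n (cnt y)) = (Φ : (Fin n → Fin 2) → ℂ) y
    obtain ⟨σ, hσ⟩ := exists_perm (y := y) (z := rep n (cnt y)) (by rw [cnt_rep (cnt_le y)])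
    calc (Φ : (Fin n → Fin 2) → ℂ) (rep n (cnt y))
        = (Φ : (Fin n → Fin 2) → ℂ) (rep n (cnt y) ∘ σ) := (Φ.2 σ (rep n (cnt y))).symm
      _ = (Φ : (Fin n → Fin 2) → ℂ) y := by rw [hσ]
  have e : (symSubspace n) ≃ₗ[ℂ] (Fin (n + 1) → ℂ) := LinearEquiv.ofLinear f g hfg hgf
  rw [e.finrank_eq]
  simp [Module.finrank_pi]

lemma sum_comm3 {α β' γ : Type*} [Fintype α] [Fintype β'] [Fintype γ]
    (f : α → β' → γ → ℂ) :
    ∑ i : α, ∑ j : β', ∑ x : γ, f i j x = ∑ x : γ, ∑ i : α, ∑ j : β', f i j x :=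
  (Finset.sum_congr rfl fun _ _ => Finset.sum_comm).trans Finset.sum_comm

/-- contraction of `Φ` with `⟨β_uv|` at qubits u,v -/
noncomputable def contr (β : Fin n → Fin n → Fin 2 × Fin 2 → ℂ) (u v : Fin n)
    (Φ : (Fin n → Fin 2) → ℂ) (x : Fin n → Fin 2) : ℂ :=
  ∑ i : Fin 2, ∑ j : Fin 2, star (β u v (i, j)) * Φ (upd2 x u v i j)

lemma contr_upd2 {u v : Fin n} (h : u ≠ v) (β : Fin n → Fin n → Fin 2 × Fin 2 → ℂ)
    (Φ : (Fin n → Fin 2) → ℂ) (x : Fin n → Fin 2) (i j : Fin 2) :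
    contr β u v Φ (upd2 x u v i j) = contr β u v Φ x := by
  unfold contr
  simp only [upd2_upd2 h]

section Main

variable {β : Fin n → Fin n → Fin 2 × Fin 2 → ℂ}
  {H : Matrix (Fin n → Fin 2) (Fin n → Fin 2) ℂ}

lemma mulVec_eq
    (hH : ∀ x y : Fin n → Fin 2, H x y = ∑ u : Fin n, ∑ v : Fin n, if u < v then
        β u v (x u, x v) * star (β u v (y u, y v)) *
          (if ∀ k : Fin n, k ≠ u → k ≠ v → x k = y k then 1 else 0) else 0)
    (Φ : (Fin n → Fin 2) → ℂ) (x : Fin n → Fin 2) :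
    H.mulVec Φ x = ∑ u : Fin n, ∑ v : Fin n,
      (if u < v then β u v (x u, x v) * contr β u v Φ x else 0) := by
  have h0 : H.mulVec Φ x = ∑ y : Fin n → Fin 2, H x y * Φ y := by
    simp [Matrix.mulVec, dotProduct]
  rw [h0]
  simp only [hH, Finset.sum_mul]
  rw [Finset.sum_comm]
  refine Finset.sum_congr rfl fun u _ => ?_
  rw [Finset.sum_comm]
  refine Finset.sum_congr rfl fun v _ => ?_
  simp only [ite_mul, zero_mul]
  by_cases huv : u < v
  · simp only [if_pos huv]
    have hne : u ≠ v := ne_of_lt huv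
    calc ∑ y : Fin n → Fin 2, β u v (x u, x v) * star (β u v (y u, y v)) *
          (if ∀ k : Fin n, k ≠ u → k ≠ v → x k = y k then 1 else 0) * Φ y
        = ∑ y : Fin n → Fin 2, (star (β u v (y u, y v)) * Φ y * β u v (x u, x v)) *
          (if ∀ k : Fin n, k ≠ u → k ≠ v → x k = y k then 1 else 0) := by
          refine Finset.sum_congr rfl fun y _ => by ring
      _ = ∑ i : Fin 2, ∑ j : Fin 2, star (β u v ((upd2 x u v i j) u, (upd2 x u v i j) v)) *
            Φ (upd2 x u v i j) * β u v (x u, x v) := sum_delta hne _ x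
      _ = β u v (x u, x v) * contr β u v Φ x := by
          unfold contr
          rw [Finset.mul_sum]
          refine Finset.sum_congr rfl fun i _ => ?_
          rw [Finset.mul_sum]
          refine Finset.sum_congr rfl fun j _ => ?_
          rw [upd2_u hne, upd2_v]
          ring
  · simp [huv]

lemma star_contr {u v : Fin n} (hne : u ≠ v) (Φ : (Fin n → Fin 2) → ℂ) (x : Fin n → Fin 2) :
    star (contr β u v Φ x) = ∑ i : Fin 2, ∑ j : Fin 2, star (Φ (upd2 x u v i j)) * β u v (i, j) := by
  unfold contr
  rw [star_sum]
  refine Finset.sum_congr rfl fun i _ => ?_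
  rw [star_sum]
  refine Finset.sum_congr rfl fun j _ => ?_
  rw [star_mul', star_star]
  ring

lemma ker_iff
    (hH : ∀ x y : Fin n → Fin 2, H x y = ∑ u : Fin n, ∑ v : Fin n, if u < v then
        β u v (x u, x v) * star (β u v (y u, y v)) *
          (if ∀ k : Fin n, k ≠ u → k ≠ v → x k = y k then 1 else 0) else 0)
    (Φ : (Fin n → Fin 2) → ℂ) :
    H.mulVec Φ = 0 ↔ ∀ u v : Fin n, u < v → ∀ x : Fin n → Fin 2, contr β u v Φ x = 0 := by
  constructor
  · intro hΦ
    have hQ : ∀ u v : Fin n, u ≠ v →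
        (4 : ℂ) * ∑ x : Fin n → Fin 2, star (Φ x) * (β u v (x u, x v) * contr β u v Φ x)
          = ∑ x : Fin n → Fin 2, star (contr β u v Φ x) * contr β u v Φ x := by
      intro u v hne
      rw [← sum_upd2 hne (fun x => star (Φ x) * (β u v (x u, x v) * contr β u v Φ x))]
      rw [sum_comm3]
      refine Finset.sum_congr rfl fun x _ => ?_
      rw [star_contr hne, Finset.sum_mul]
      refine Finset.sum_congr rfl fun i _ => ?_
      rw [Finset.sum_mul]
      refine Finset.sum_congr rfl fun j _ => ?_
      simp only [upd2_u hne, upd2_v, contr_upd2 hne]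
      ring
    have hR : ∀ u v : Fin n, u < v →
        (∑ x : Fin n → Fin 2, star (Φ x) * (β u v (x u, x v) * contr β u v Φ x))
          = ((((1:ℝ)/4) * ∑ x : Fin n → Fin 2, Complex.normSq (contr β u v Φ x) : ℝ) : ℂ) := by
      intro u v huv
      have h4 := hQ u v (ne_of_lt huv)
      have hns : ∑ x : Fin n → Fin 2, star (contr β u v Φ x) * contr β u v Φ x
          = ((∑ x : Fin n → Fin 2, Complex.normSq (contr β u v Φ x) : ℝ) : ℂ) := by
        rw [Complex.ofReal_sum]
        refine Finset.sum_congr rfl fun x _ => ?_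
        rw [mul_comm, Complex.star_def, Complex.mul_conj]
      rw [hns] at h4
      rw [Complex.ofReal_mul]
      rw [show (((1:ℝ)/4 : ℝ) : ℂ) = 1/4 by norm_num]
      linear_combination h4 / 4
    have hS : ∑ u : Fin n, ∑ v : Fin n, (if u < v then
        ∑ x : Fin n → Fin 2, star (Φ x) * (β u v (x u, x v) * contr β u v Φ x) else 0) = 0 := by
      calc ∑ u : Fin n, ∑ v : Fin n, (if u < v then
            ∑ x : Fin n → Fin 2, star (Φ x) * (β u v (x u, x v) * contr β u v Φ x) else 0)
          = ∑ u : Fin n, ∑ v : Fin n, ∑ x : Fin n → Fin 2, (if u < v then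
            star (Φ x) * (β u v (x u, x v) * contr β u v Φ x) else 0) := by
            refine Finset.sum_congr rfl fun u _ => Finset.sum_congr rfl fun v _ => ?_
            by_cases huv : u < v <;> simp [huv]
        _ = ∑ x : Fin n → Fin 2, ∑ u : Fin n, ∑ v : Fin n, (if u < v then
            star (Φ x) * (β u v (x u, x v) * contr β u v Φ x) else 0) := sum_comm3 _
        _ = ∑ x : Fin n → Fin 2, star (Φ x) * H.mulVec Φ x := by
            refine Finset.sum_congr rfl fun x _ => ?_
            rw [mulVec_eq hH, Finset.mul_sum]
            refine Finset.sum_congr rfl fun u _ => ?_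
            rw [Finset.mul_sum]
            refine Finset.sum_congr rfl fun v _ => ?_
            by_cases huv : u < v <;> simp [huv]
        _ = 0 := by rw [hΦ]; simp
    have hreal : ∑ u : Fin n, ∑ v : Fin n, (if u < v then
        ((1:ℝ)/4) * ∑ x : Fin n → Fin 2, Complex.normSq (contr β u v Φ x) else 0) = 0 := by
      have hS' : ((∑ u : Fin n, ∑ v : Fin n, (if u < v then
          ((1:ℝ)/4) * ∑ x : Fin n → Fin 2, Complex.normSq (contr β u v Φ x) else 0) : ℝ) : ℂ) = 0 := by
        calc ((∑ u : Fin n, ∑ v : Fin n, (if u < v then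
            ((1:ℝ)/4) * ∑ x : Fin n → Fin 2, Complex.normSq (contr β u v Φ x) else 0) : ℝ) : ℂ)
            = ∑ u : Fin n, ∑ v : Fin n, (if u < v then
              ∑ x : Fin n → Fin 2, star (Φ x) * (β u v (x u, x v) * contr β u v Φ x) else 0) := by
              rw [Complex.ofReal_sum]
              refine Finset.sum_congr rfl fun u _ => ?_
              rw [Complex.ofReal_sum]
              refine Finset.sum_congr rfl fun v _ => ?_
              rw [apply_ite ((↑) : ℝ → ℂ), Complex.ofReal_zero]
              by_cases huv : u < v
              · rw [if_pos huv, if_pos huv, hR u v huv]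
              · rw [if_neg huv, if_neg huv]
          _ = 0 := hS
      exact_mod_cast hS'
    intro u v huv x
    have hnn : ∀ a b : Fin n, (0:ℝ) ≤ (if a < b then
        ((1:ℝ)/4) * ∑ x : Fin n → Fin 2, Complex.normSq (contr β a b Φ x) else 0) := by
      intro a b
      split
      · exact mul_nonneg (by norm_num) (Finset.sum_nonneg fun x _ => Complex.normSq_nonneg _)
      · exact le_refl 0
    have houter := (Finset.sum_eq_zero_iff_of_nonneg
      (fun a _ => Finset.sum_nonneg fun b _ => hnn a b)).mp hreal u (Finset.mem_univ u)
    have hinner := (Finset.sum_eq_zero_iff_of_nonneg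
      (fun b _ => hnn u b)).mp houter v (Finset.mem_univ v)
    rw [if_pos huv] at hinner
    have hR0 : ∑ x : Fin n → Fin 2, Complex.normSq (contr β u v Φ x) = 0 := by
      have h14 : ((1:ℝ)/4) ≠ 0 := by norm_num
      exact (mul_eq_zero.mp hinner).resolve_left h14
    have := (Finset.sum_eq_zero_iff_of_nonneg
      (fun x _ => Complex.normSq_nonneg (contr β u v Φ x))).mp hR0 x (Finset.mem_univ x)
    exact Complex.normSq_eq_zero.mp this
  · intro hc
    funext x
    rw [mulVec_eq hH]
    simp only [Pi.zero_apply]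
    refine Finset.sum_eq_zero fun u _ => Finset.sum_eq_zero fun v _ => ?_
    by_cases huv : u < v
    · simp [huv, hc u v huv x]
    · simp [huv]

lemma prod_split {u v : Fin n} (h : u ≠ v) (f : Fin n → ℂ) :
    ∏ k : Fin n, f k = f u * (f v * ∏ k ∈ (Finset.univ.erase u).erase v, f k) := by
  rw [← Finset.mul_prod_erase Finset.univ f (Finset.mem_univ u)]
  congr 1
  rw [← Finset.mul_prod_erase (Finset.univ.erase u) f
    (by simp [Finset.mem_erase, h.symm] : v ∈ Finset.univ.erase u)]

variable {L : Fin n → Matrix (Fin 2) (Fin 2) ℂ} {T : Matrix (Fin n → Fin 2) (Fin n → Fin 2) ℂ}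
  {lam : Fin n → Fin n → ℂ}

lemma Tsplit1 (hT : ∀ x y : Fin n → Fin 2, T x y = ∏ k : Fin n, (L k)⁻¹ (x k) (y k))
    {u v : Fin n} (h : u ≠ v) (x z : Fin n → Fin 2) (i j : Fin 2) :
    T (upd2 x u v i j) z = (L u)⁻¹ i (z u) * ((L v)⁻¹ j (z v) *
      ∏ k ∈ (Finset.univ.erase u).erase v, (L k)⁻¹ (x k) (z k)) := by
  rw [hT, prod_split h]
  rw [upd2_u h, upd2_v]
  congr 1
  congr 1
  refine Finset.prod_congr rfl fun k hk => ?_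
  simp only [Finset.mem_erase] at hk
  rw [upd2_other hk.2.1 hk.1]

lemma Tsplit2 (hT : ∀ x y : Fin n → Fin 2, T x y = ∏ k : Fin n, (L k)⁻¹ (x k) (y k))
    {u v : Fin n} (h : u ≠ v) (x z : Fin n → Fin 2) (i j : Fin 2) :
    T x (upd2 z u v i j) = (L u)⁻¹ (x u) i * ((L v)⁻¹ (x v) j *
      ∏ k ∈ (Finset.univ.erase u).erase v, (L k)⁻¹ (x k) (z k)) := by
  rw [hT, prod_split h]
  rw [upd2_u h, upd2_v]
  congr 1
  congr 1
  refine Finset.prod_congr rfl fun k hk => ?_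
  simp only [Finset.mem_erase] at hk
  rw [upd2_other hk.2.1 hk.1]

lemma T_mul_T' (hL : ∀ k : Fin n, IsUnit (L k).det)
    (hT : ∀ x y : Fin n → Fin 2, T x y = ∏ k : Fin n, (L k)⁻¹ (x k) (y k)) :
    T * (Matrix.of fun x y : Fin n → Fin 2 => ∏ k : Fin n, L k (x k) (y k)) = 1 := by
  ext x y
  rw [Matrix.mul_apply]
  simp only [hT, Matrix.of_apply]
  rw [prod_mul_prod (fun k => (L k)⁻¹) L x y]
  rw [show (∏ k : Fin n, ((L k)⁻¹ * L k) (x k) (y k)) = ∏ k : Fin n, ((1 : Matrix (Fin 2) (Fin 2) ℂ) (x k) (y k)) from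
    Finset.prod_congr rfl fun k _ => by rw [Matrix.nonsing_inv_mul _ (hL k)]]
  simp [Matrix.one_apply, Finset.prod_boole, funext_iff]

lemma T'_mul_T (hL : ∀ k : Fin n, IsUnit (L k).det)
    (hT : ∀ x y : Fin n → Fin 2, T x y = ∏ k : Fin n, (L k)⁻¹ (x k) (y k)) :
    (Matrix.of fun x y : Fin n → Fin 2 => ∏ k : Fin n, L k (x k) (y k)) * T = 1 := by
  ext x y
  rw [Matrix.mul_apply]
  simp only [hT, Matrix.of_apply]
  rw [prod_mul_prod L (fun k => (L k)⁻¹) x y]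
  rw [show (∏ k : Fin n, (L k * (L k)⁻¹) (x k) (y k)) = ∏ k : Fin n, ((1 : Matrix (Fin 2) (Fin 2) ℂ) (x k) (y k)) from
    Finset.prod_congr rfl fun k _ => by rw [Matrix.mul_nonsing_inv _ (hL k)]]
  simp [Matrix.one_apply, Finset.prod_boole, funext_iff]

lemma contr_mulVec (hL : ∀ k : Fin n, IsUnit (L k).det)
    (hT : ∀ x y : Fin n → Fin 2, T x y = ∏ k : Fin n, (L k)⁻¹ (x k) (y k))
    {u v : Fin n} (hne : u ≠ v)
    (hβuv : ∀ i j : Fin 2, star (β u v (i, j)) =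
      lam u v * ∑ p : Fin 2, ∑ q : Fin 2, star (singlet (p, q)) * L u p i * L v q j)
    (Ψ : (Fin n → Fin 2) → ℂ) (x : Fin n → Fin 2) :
    contr β u v (T.mulVec Ψ) x
      = lam u v * ∑ z : Fin n → Fin 2, star (singlet (z u, z v)) * Ψ z *
          ∏ k ∈ (Finset.univ.erase u).erase v, (L k)⁻¹ (x k) (z k) := by
  have hdelta : ∀ a b : Fin 2, star (singlet (a, b)) = ∑ p : Fin 2, ∑ q : Fin 2,
      star (singlet (p, q)) * (∑ i : Fin 2, L u p i * (L u)⁻¹ i a)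
        * (∑ j : Fin 2, L v q j * (L v)⁻¹ j b) := by
    intro a b
    have hu : ∀ p a' : Fin 2, (∑ i : Fin 2, L u p i * (L u)⁻¹ i a')
        = if p = a' then 1 else 0 := by
      intro p a'
      rw [← Matrix.mul_apply, Matrix.mul_nonsing_inv _ (hL u), Matrix.one_apply]
    have hv : ∀ q b' : Fin 2, (∑ j : Fin 2, L v q j * (L v)⁻¹ j b')
        = if q = b' then 1 else 0 := by
      intro q b'
      rw [← Matrix.mul_apply, Matrix.mul_nonsing_inv _ (hL v), Matrix.one_apply]
    simp only [hu, hv]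
    fin_cases a <;> fin_cases b <;> simp [Fin.sum_univ_two]
  calc contr β u v (T.mulVec Ψ) x
      = ∑ i : Fin 2, ∑ j : Fin 2, star (β u v (i, j)) *
          ∑ z : Fin n → Fin 2, ((L u)⁻¹ i (z u) * ((L v)⁻¹ j (z v) *
            ∏ k ∈ (Finset.univ.erase u).erase v, (L k)⁻¹ (x k) (z k)) * Ψ z) := by
        unfold contr
        refine Finset.sum_congr rfl fun i _ => Finset.sum_congr rfl fun j _ => ?_
        congr 1
        rw [show T.mulVec Ψ (upd2 x u v i j) = ∑ z : Fin n → Fin 2, T (upd2 x u v i j) z * Ψ z from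
          by simp [Matrix.mulVec, dotProduct]]
        exact Finset.sum_congr rfl fun z _ => by rw [Tsplit1 hT hne]
    _ = ∑ z : Fin n → Fin 2, ∑ i : Fin 2, ∑ j : Fin 2, star (β u v (i, j)) *
          ((L u)⁻¹ i (z u) * ((L v)⁻¹ j (z v) *
            ∏ k ∈ (Finset.univ.erase u).erase v, (L k)⁻¹ (x k) (z k)) * Ψ z) := by
        simp only [Finset.mul_sum]
        exact sum_comm3 _
    _ = ∑ z : Fin n → Fin 2, lam u v * (star (singlet (z u, z v)) * Ψ z *
          ∏ k ∈ (Finset.univ.erase u).erase v, (L k)⁻¹ (x k) (z k)) := by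
        refine Finset.sum_congr rfl fun z _ => ?_
        rw [hdelta (z u) (z v)]
        simp only [hβuv]
        simp only [Fin.sum_univ_two]
        ring
    _ = lam u v * ∑ z : Fin n → Fin 2, star (singlet (z u, z v)) * Ψ z *
          ∏ k ∈ (Finset.univ.erase u).erase v, (L k)⁻¹ (x k) (z k) :=
        (Finset.mul_sum _ _ _).symm

lemma prod_rest_upd2 {u v : Fin n} (hne : u ≠ v) (x z : Fin n → Fin 2) (i j : Fin 2) :
    (∏ k ∈ (Finset.univ.erase u).erase v, (L k)⁻¹ (x k) ((upd2 z u v i j) k))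
      = ∏ k ∈ (Finset.univ.erase u).erase v, (L k)⁻¹ (x k) (z k) := by
  refine Finset.prod_congr rfl fun k hk => ?_
  simp only [Finset.mem_erase] at hk
  rw [upd2_other hk.2.1 hk.1]

/-- contraction against the singlet of a permutation-invariant vector vanishes -/
lemma swap_sum_zero {u v : Fin n} (hne : u ≠ v) (Ψ : (Fin n → Fin 2) → ℂ)
    (hΨ : ∀ σ : Equiv.Perm (Fin n), ∀ y : Fin n → Fin 2, Ψ (y ∘ σ) = Ψ y)
    (x : Fin n → Fin 2) :
    ∑ z : Fin n → Fin 2, star (singlet (z u, z v)) * Ψ z *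
      ∏ k ∈ (Finset.univ.erase u).erase v, (L k)⁻¹ (x k) (z k) = 0 := by
  set G : (Fin n → Fin 2) → ℂ := fun z => star (singlet (z u, z v)) * Ψ z *
    ∏ k ∈ (Finset.univ.erase u).erase v, (L k)⁻¹ (x k) (z k) with hG
  have hbij : Function.Bijective (fun z : Fin n → Fin 2 => z ∘ Equiv.swap u v) := by
    have hinv : Function.Involutive (fun z : Fin n → Fin 2 => z ∘ Equiv.swap u v) := by
      intro z
      funext k
      simp [Function.comp, Equiv.swap_apply_self]
    exact hinv.bijective
  have hflip : ∀ z : Fin n → Fin 2, G (z ∘ Equiv.swap u v) = - G z := by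
    intro z
    rw [hG]
    simp only
    rw [show (z ∘ Equiv.swap u v) u = z v from by simp [Function.comp, Equiv.swap_apply_left]]
    rw [show (z ∘ Equiv.swap u v) v = z u from by simp [Function.comp, Equiv.swap_apply_right]]
    rw [hΨ (Equiv.swap u v) z]
    rw [show (∏ k ∈ (Finset.univ.erase u).erase v, (L k)⁻¹ (x k) ((z ∘ Equiv.swap u v) k))
        = ∏ k ∈ (Finset.univ.erase u).erase v, (L k)⁻¹ (x k) (z k) from ?_]
    · rw [singlet_antisym, star_neg]
      ring
    · refine Finset.prod_congr rfl fun k hk => ?_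
      simp only [Finset.mem_erase] at hk
      rw [Function.comp_apply, Equiv.swap_apply_of_ne_of_ne hk.2.1 hk.1]
  have hsum : ∑ z : Fin n → Fin 2, G (z ∘ Equiv.swap u v) = ∑ z : Fin n → Fin 2, G z :=
    Fintype.sum_bijective _ hbij _ _ (fun z => rfl)
  have h2 : ∑ z : Fin n → Fin 2, G z = - ∑ z : Fin n → Fin 2, G z := by
    calc ∑ z : Fin n → Fin 2, G z = ∑ z : Fin n → Fin 2, G (z ∘ Equiv.swap u v) := hsum.symm
      _ = ∑ z : Fin n → Fin 2, - G z := Finset.sum_congr rfl fun z _ => hflip z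
      _ = - ∑ z : Fin n → Fin 2, G z := by rw [Finset.sum_neg_distrib]
  linear_combination h2 / 2

lemma singlet01 : singlet (0, 1) = (((Real.sqrt 2 : ℝ) : ℂ))⁻¹ := by simp [singlet]
lemma singlet10 : singlet (1, 0) = -(((Real.sqrt 2 : ℝ) : ℂ))⁻¹ := by
  simp [singlet, Prod.ext_iff]
lemma singlet00 : singlet (0, 0) = 0 := by simp [singlet, Prod.ext_iff]
lemma singlet11 : singlet (1, 1) = 0 := by simp [singlet, Prod.ext_iff]

/-- from vanishing contractions, derive the exchange relation for the preimage -/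
lemma rel_of_contr (hL : ∀ k : Fin n, IsUnit (L k).det)
    (hT : ∀ x y : Fin n → Fin 2, T x y = ∏ k : Fin n, (L k)⁻¹ (x k) (y k))
    {u v : Fin n} (hne : u ≠ v) (hlamuv : lam u v ≠ 0)
    (hβuv : ∀ i j : Fin 2, star (β u v (i, j)) =
      lam u v * ∑ p : Fin 2, ∑ q : Fin 2, star (singlet (p, q)) * L u p i * L v q j)
    (Ψ : (Fin n → Fin 2) → ℂ)
    (h0 : ∀ x : Fin n → Fin 2, contr β u v (T.mulVec Ψ) x = 0) :
    ∀ z : Fin n → Fin 2, Ψ (upd2 z u v 0 1) = Ψ (upd2 z u v 1 0) := by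
  -- the z-sums vanish
  have hz : ∀ x : Fin n → Fin 2, ∑ z : Fin n → Fin 2, star (singlet (z u, z v)) * Ψ z *
      ∏ k ∈ (Finset.univ.erase u).erase v, (L k)⁻¹ (x k) (z k) = 0 := by
    intro x
    have := h0 x
    rw [contr_mulVec hL hT hne hβuv Ψ x] at this
    exact (mul_eq_zero.mp this).resolve_left hlamuv
  set A : (Fin n → Fin 2) → ℂ := fun z => ∑ i : Fin 2, ∑ j : Fin 2,
    star (singlet (i, j)) * Ψ (upd2 z u v i j) with hA
  have hA_upd2 : ∀ (z : Fin n → Fin 2) (i j : Fin 2), A (upd2 z u v i j) = A z := by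
    intro z i j
    rw [hA]
    simp only [upd2_upd2 hne]
  -- the P-weighted sums of A vanish
  have hPA : ∀ x : Fin n → Fin 2, ∑ z : Fin n → Fin 2,
      A z * ∏ k ∈ (Finset.univ.erase u).erase v, (L k)⁻¹ (x k) (z k) = 0 := by
    intro x
    have h4 := sum_upd2 hne (fun z => star (singlet (z u, z v)) * Ψ z *
      ∏ k ∈ (Finset.univ.erase u).erase v, (L k)⁻¹ (x k) (z k))
    rw [hz x, mul_zero] at h4
    simp only [upd2_u hne, upd2_v, prod_rest_upd2 hne] at h4
    calc ∑ z : Fin n → Fin 2, A z * ∏ k ∈ (Finset.univ.erase u).erase v, (L k)⁻¹ (x k) (z k)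
        = ∑ z : Fin n → Fin 2, ∑ i : Fin 2, ∑ j : Fin 2, star (singlet (i, j)) * Ψ (upd2 z u v i j) *
          ∏ k ∈ (Finset.univ.erase u).erase v, (L k)⁻¹ (x k) (z k) := by
          refine Finset.sum_congr rfl fun z _ => ?_
          rw [hA]
          simp only [Finset.sum_mul]
      _ = ∑ i : Fin 2, ∑ j : Fin 2, ∑ z : Fin n → Fin 2, star (singlet (i, j)) * Ψ (upd2 z u v i j) *
          ∏ k ∈ (Finset.univ.erase u).erase v, (L k)⁻¹ (x k) (z k) := (sum_comm3 _).symm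
      _ = 0 := h4
  -- hence T ⬝ A = 0 and so A = 0
  have hTA : T.mulVec A = 0 := by
    funext x
    show T.mulVec A x = 0
    have hmv : T.mulVec A x = ∑ z : Fin n → Fin 2, T x z * A z := by
      simp [Matrix.mulVec, dotProduct]
    have h4 := sum_upd2 hne (fun z => T x z * A z)
    have hterm : ∀ i j : Fin 2, ∑ z : Fin n → Fin 2, T x (upd2 z u v i j) * A (upd2 z u v i j) = 0 := by
      intro i j
      calc ∑ z : Fin n → Fin 2, T x (upd2 z u v i j) * A (upd2 z u v i j)
          = ∑ z : Fin n → Fin 2, ((L u)⁻¹ (x u) i * (L v)⁻¹ (x v) j) *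
            (A z * ∏ k ∈ (Finset.univ.erase u).erase v, (L k)⁻¹ (x k) (z k)) := by
            refine Finset.sum_congr rfl fun z _ => ?_
            rw [Tsplit2 hT hne, hA_upd2]
            ring
        _ = ((L u)⁻¹ (x u) i * (L v)⁻¹ (x v) j) * ∑ z : Fin n → Fin 2,
            (A z * ∏ k ∈ (Finset.univ.erase u).erase v, (L k)⁻¹ (x k) (z k)) :=
            (Finset.mul_sum _ _ _).symm
        _ = 0 := by rw [hPA x, mul_zero]
    simp only [hterm, Finset.sum_const, Finset.card_univ, Fintype.card_fin, smul_zero] at h4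
    rw [hmv]
    linear_combination - h4 / 4
  have hA0 : A = 0 := by
    have hT'T := T'_mul_T hL hT
    have := congrArg (fun w => (Matrix.of fun x y : Fin n → Fin 2 =>
      ∏ k : Fin n, L k (x k) (y k)).mulVec w) hTA
    simpa [Matrix.mulVec_mulVec, hT'T, Matrix.one_mulVec] using this
  -- read off the relation
  intro z
  have hAz : A z = 0 := by rw [hA0]; rfl
  rw [hA] at hAz
  simp only [Fin.sum_univ_two, star_singlet, singlet00, singlet01, singlet10, singlet11] at hAz
  have hc : (((Real.sqrt 2 : ℝ) : ℂ))⁻¹ * (Ψ (upd2 z u v 0 1) - Ψ (upd2 z u v 1 0)) = 0 := by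
    linear_combination hAz
  have := (mul_eq_zero.mp hc).resolve_left sqrt2inv_ne
  linear_combination this

/-- exchange relations imply full permutation invariance -/
lemma sym_of_rel {Ψ : (Fin n → Fin 2) → ℂ}
    (hrel : ∀ u v : Fin n, u < v → ∀ z : Fin n → Fin 2,
      Ψ (upd2 z u v 0 1) = Ψ (upd2 z u v 1 0)) :
    ∀ σ : Equiv.Perm (Fin n), ∀ y : Fin n → Fin 2, Ψ (y ∘ σ) = Ψ y := by
  have h2 : ∀ a : Fin 2, a = 0 ∨ a = 1 := by decide
  have hlt : ∀ u v : Fin n, u < v → ∀ y : Fin n → Fin 2, Ψ (y ∘ Equiv.swap u v) = Ψ y := by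
    intro u v huv y
    have hne : u ≠ v := ne_of_lt huv
    have hcomp : y ∘ Equiv.swap u v = upd2 y u v (y v) (y u) := by
      funext k
      by_cases hku : k = u
      · subst hku; rw [Function.comp_apply, Equiv.swap_apply_left, upd2_u hne]
      · by_cases hkv : k = v
        · subst hkv; rw [Function.comp_apply, Equiv.swap_apply_right, upd2_v]
        · rw [Function.comp_apply, Equiv.swap_apply_of_ne_of_ne hku hkv, upd2_other hku hkv]
    rw [hcomp]
    conv_rhs => rw [← upd2_self hne y]
    rcases h2 (y u) with hu | hu <;> rcases h2 (y v) with hv | hv <;> rw [hu, hv]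
    · exact (hrel u v huv y).symm
    · exact hrel u v huv y
  have hswap : ∀ u v : Fin n, u ≠ v → ∀ y : Fin n → Fin 2, Ψ (y ∘ Equiv.swap u v) = Ψ y := by
    intro u v hne y
    rcases lt_trichotomy u v with h | h | h
    · exact hlt u v h y
    · exact absurd h hne
    · rw [Equiv.swap_comm]
      exact hlt v u h y
  intro σ
  refine Equiv.Perm.swap_induction_on σ (fun y => by simp) ?_
  intro f a b hab ih y
  have : y ∘ ⇑(Equiv.swap a b * f) = (y ∘ ⇑(Equiv.swap a b)) ∘ ⇑f := by
    funext k
    simp [Function.comp, Equiv.Perm.mul_apply]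
  rw [this, ih (y ∘ ⇑(Equiv.swap a b)), hswap a b hab y]

end Main

end Stmt10

/-- Let `H = ∑_{u<v} h_uv` on `(ℂ²)^{⊗n}`, where `h_uv = |β_uv⟩⟨β_uv| ⊗ 1` acts on
qubits `u, v` and `⟨β_uv| = λ_uv ⟨Ψ⁻|(L_u ⊗ L_v)` for invertible `L_k` and nonzero
`λ_uv`.  Then `ker H = T(Sym^n(ℂ²))` for `T = (L₁ ⊗ ⋯ ⊗ L_n)⁻¹`, and
`dim ker H = n + 1`. -/
theorem stmt10 (n : ℕ) (hn : 1 ≤ n) (L : Fin n → Matrix (Fin 2) (Fin 2) ℂ)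
    (hL : ∀ k : Fin n, IsUnit (L k).det)
    (lam : Fin n → Fin n → ℂ) (hlam : ∀ u v : Fin n, u ≠ v → lam u v ≠ 0)
    (β : Fin n → Fin n → Fin 2 × Fin 2 → ℂ)
    (hβ : ∀ u v : Fin n, u ≠ v → ∀ i j : Fin 2, star (β u v (i, j)) =
      lam u v * ∑ p : Fin 2, ∑ q : Fin 2, star (singlet (p, q)) * L u p i * L v q j)
    (H : Matrix (Fin n → Fin 2) (Fin n → Fin 2) ℂ)
    (hH : ∀ x y : Fin n → Fin 2, H x y = ∑ u : Fin n, ∑ v : Fin n, if u < v then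
        β u v (x u, x v) * star (β u v (y u, y v)) *
          (if ∀ k : Fin n, k ≠ u → k ≠ v → x k = y k then 1 else 0) else 0)
    (T : Matrix (Fin n → Fin 2) (Fin n → Fin 2) ℂ)
    (hT : ∀ x y : Fin n → Fin 2, T x y = ∏ k : Fin n, (L k)⁻¹ (x k) (y k)) :
    LinearMap.ker H.mulVecLin = Submodule.map T.mulVecLin (symSubspace n) ∧
    Module.finrank ℂ (LinearMap.ker H.mulVecLin) = n + 1 := by
  classical
  have hTT' := Stmt10.T_mul_T' hL hT
  have hT'T := Stmt10.T'_mul_T hL hT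
  have hinj : Function.Injective T.mulVecLin := by
    intro a b hab
    simp only [Matrix.mulVecLin_apply] at hab
    have := congrArg (fun w => (Matrix.of fun x y : Fin n → Fin 2 =>
      ∏ k : Fin n, L k (x k) (y k)).mulVec w) hab
    simpa [Matrix.mulVec_mulVec, hT'T, Matrix.one_mulVec] using this
  have hmain : LinearMap.ker H.mulVecLin = Submodule.map T.mulVecLin (symSubspace n) := by
    ext Φ
    simp only [LinearMap.mem_ker, Submodule.mem_map, Matrix.mulVecLin_apply]
    constructor
    · intro hΦ
      have hc := (Stmt10.ker_iff hH Φ).mp hΦ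
      have hback : T.mulVec ((Matrix.of fun x y : Fin n → Fin 2 =>
          ∏ k : Fin n, L k (x k) (y k)).mulVec Φ) = Φ := by
        rw [Matrix.mulVec_mulVec, hTT', Matrix.one_mulVec]
      refine ⟨(Matrix.of fun x y : Fin n → Fin 2 =>
        ∏ k : Fin n, L k (x k) (y k)).mulVec Φ, ?_, hback⟩
      refine Stmt10.sym_of_rel ?_
      intro u v huv z
      refine Stmt10.rel_of_contr hL hT (ne_of_lt huv) (hlam u v (ne_of_lt huv))
        (hβ u v (ne_of_lt huv)) _ ?_ z
      intro x
      rw [hback]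
      exact hc u v huv x
    · rintro ⟨Ψ, hΨ, rfl⟩
      refine (Stmt10.ker_iff hH _).mpr ?_
      intro u v huv x
      rw [Stmt10.contr_mulVec hL hT (ne_of_lt huv) (hβ u v (ne_of_lt huv)) Ψ x]
      rw [Stmt10.swap_sum_zero (ne_of_lt huv) Ψ hΨ x, mul_zero]
  refine ⟨hmain, ?_⟩
  rw [hmain]
  rw [← (Submodule.equivMapOfInjective T.mulVecLin hinj (symSubspace n)).finrank_eq]
  exact Stmt10.finrank_symSubspace n
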